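/- Let v : Fin n → ℂ be a unit vector, let ρ := v vᴴ be the corresponding rank-one projection, and let σ be a density matrix on Fin n such that σ · v = p₀ • v for some real p₀ > 0 (v is an eigenvector of σ with nonzero eigenvalue p₀). Then for every ε ∈ [0,1], sInf { Re Tr[Λ·σ] : Λ is a test with Re Tr[Λ·ρ] ≥ 1 − ε } = (1 − ε) · p₀; in particular, when ε < 1, D_h^ε(ρ‖σ) = −log₂((1 − ε) · p₀), and the infimum is attained by Λ = (1 − ε) • ρ. -/

import Mathlib

open Matrix Kronecker
open scoped ComplexOrder

open scoped Classical in
noncomputable def matSqrt {n : Type*} [Fintype n] [DecidableEq n] (A : Matrix n n ℂ) :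
    Matrix n n ℂ :=
  if h : A.PosSemidef then
    (h.1.eigenvectorUnitary : Matrix n n ℂ) *
      diagonal ((↑) ∘ (Real.sqrt ·) ∘ h.1.eigenvalues) *
      (star h.1.eigenvectorUnitary : Matrix n n ℂ)
  else 0

noncomputable def rootFidelity {n : Type*} [Fintype n] [DecidableEq n]
    (ρ σ : Matrix n n ℂ) : ℝ :=
  (matSqrt (matSqrt σ * ρ * matSqrt σ)).trace.re

noncomputable def fidelity {n : Type*} [Fintype n] [DecidableEq n]
    (ρ σ : Matrix n n ℂ) : ℝ :=
  (rootFidelity ρ σ) ^ 2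

noncomputable def traceNorm {n : Type*} [Fintype n] [DecidableEq n] (A : Matrix n n ℂ) : ℝ :=
  (matSqrt (Aᴴ * A)).trace.re

/-- The set of attainable type-II error values in hypothesis testing. -/
def testValues {n : Type*} [Fintype n] [DecidableEq n] (ρ σ : Matrix n n ℂ) (ε : ℝ) :
    Set ℝ :=
  { x | ∃ Λ : Matrix n n ℂ, Λ.PosSemidef ∧ (1 - Λ).PosSemidef ∧
      1 - ε ≤ (Λ * ρ).trace.re ∧ x = (Λ * σ).trace.re }

/-- ε-hypothesis-testing relative entropy. -/
noncomputable def Dh {n : Type*} [Fintype n] [DecidableEq n]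
    (ρ σ : Matrix n n ℂ) (ε : ℝ) : ℝ :=
  - Real.logb 2 (sInf (testValues ρ σ ε))

/-- GHZ unit vector. -/
noncomputable def ghz (M K : ℕ) : (Fin M → Fin K) → ℂ :=
  fun f => if ∃ c, ∀ m, f m = c then ((Real.sqrt K : ℂ))⁻¹ else 0

/-- GHZ rank-one projection. -/
noncomputable def ghzProj (M K : ℕ) : Matrix (Fin M → Fin K) (Fin M → Fin K) ℂ :=
  Matrix.vecMulVec (ghz M K) (star ∘ ghz M K)

/-- The twisting unitary. -/
def twist (M K d : ℕ)
    (U : (Fin M → Fin K) → Matrix (Fin M → Fin d) (Fin M → Fin d) ℂ) :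
    Matrix ((Fin M → Fin K) × (Fin M → Fin d)) ((Fin M → Fin K) × (Fin M → Fin d)) ℂ :=
  Matrix.of fun p q => if p.1 = q.1 then U p.1 p.2 q.2 else 0

/-- The privacy test `Π = W (Φ ⊗ 1) Wᴴ`. -/
noncomputable def privacyTest (M K d : ℕ)
    (U : (Fin M → Fin K) → Matrix (Fin M → Fin d) (Fin M → Fin d) ℂ) :
    Matrix ((Fin M → Fin K) × (Fin M → Fin d)) ((Fin M → Fin K) × (Fin M → Fin d)) ℂ :=
  twist M K d U * (ghzProj M K ⊗ₖ (1 : Matrix (Fin M → Fin d) (Fin M → Fin d) ℂ)) *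
    (twist M K d U)ᴴ

/-- The private state `γ = W (Φ ⊗ ω) Wᴴ`. -/
noncomputable def privateState (M K d : ℕ)
    (U : (Fin M → Fin K) → Matrix (Fin M → Fin d) (Fin M → Fin d) ℂ)
    (ω : Matrix (Fin M → Fin d) (Fin M → Fin d) ℂ) :
    Matrix ((Fin M → Fin K) × (Fin M → Fin d)) ((Fin M → Fin K) × (Fin M → Fin d)) ℂ :=
  twist M K d U * (ghzProj M K ⊗ₖ ω) * (twist M K d U)ᴴ

/-- A vector on `𝒦 × 𝒮` is product across the bipartition `J | Jᶜ` of the parties. -/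
def IsProductAcross {M K d : ℕ} (J : Set (Fin M))
    (v : (Fin M → Fin K) × (Fin M → Fin d) → ℂ) : Prop :=
  ∃ (v₁ : ((↥J) → Fin K) × ((↥J) → Fin d) → ℂ)
    (v₂ : ((↥(Jᶜ)) → Fin K) × ((↥(Jᶜ)) → Fin d) → ℂ),
    ∀ (f : Fin M → Fin K) (x : Fin M → Fin d),
      v (f, x) = v₁ (fun m => f m.1, fun m => x m.1) * v₂ (fun m => f m.1, fun m => x m.1)

/-- Biseparability: a finite convex combination of pure states, each product across
some nontrivial bipartition of the parties. -/
def Biseparable {M K d : ℕ}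
    (σ : Matrix ((Fin M → Fin K) × (Fin M → Fin d))
      ((Fin M → Fin K) × (Fin M → Fin d)) ℂ) : Prop :=
  ∃ (N : ℕ) (p : Fin N → ℝ) (w : Fin N → ((Fin M → Fin K) × (Fin M → Fin d)) → ℂ)
    (J : Fin N → Set (Fin M)),
    (∀ t, 0 ≤ p t) ∧ (∑ t, p t = 1) ∧
    (∀ t, ∑ i, ‖w t i‖ ^ 2 = 1) ∧
    (∀ t, J t ≠ ∅ ∧ J t ≠ Set.univ ∧ IsProductAcross (J t) (w t)) ∧
    σ = ∑ t, (p t : ℂ) • Matrix.vecMulVec (w t) (star ∘ w t)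

/-- Partial trace over the second tensor factor. -/
noncomputable def partialTrace₂ {A B : Type*} [Fintype B] (τ : Matrix (A × B) (A × B) ℂ) :
    Matrix A A ℂ :=
  Matrix.of fun a a' => ∑ b, τ (a, b) (a', b)

/-- Matrix logarithm of a Hermitian matrix via the spectral functional calculus. -/
noncomputable def matLog {n : Type*} [Fintype n] [DecidableEq n] (A : Matrix n n ℂ) :
    Matrix n n ℂ :=
  if hA : A.IsHermitian then
    (hA.eigenvectorUnitary : Matrix n n ℂ) *
      Matrix.diagonal (fun i => (Real.log (hA.eigenvalues i) : ℂ)) *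
      (star hA.eigenvectorUnitary : Matrix n n ℂ)
  else 0

-- aux lemmas
lemma aux_trace_psd {n : ℕ} {A : Matrix (Fin n) (Fin n) ℂ} (hA : A.PosSemidef) :
    0 ≤ A.trace := by
  apply Finset.sum_nonneg
  intro i _
  have h := hA.dotProduct_mulVec_nonneg (Pi.single i 1)
  simpa [Matrix.mulVec_single, dotProduct, Pi.single_apply] using h

lemma aux_trace_mul_psd {n : ℕ} {A B : Matrix (Fin n) (Fin n) ℂ}
    (hA : A.PosSemidef) (hB : B.PosSemidef) : 0 ≤ (A * B).trace := by
  obtain ⟨C, hC⟩ : ∃ C : Matrix (Fin n) (Fin n) ℂ, A = Cᴴ * C := by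
    open scoped MatrixOrder in
    obtain ⟨X, hX, -, hXA⟩ := CFC.exists_sqrt_of_isSelfAdjoint_of_quasispectrumRestricts
      hA.isHermitian (QuasispectrumRestricts.nnreal_of_nonneg hA.nonneg)
    exact ⟨X, by rw [← hXA]; exact congrArg (· * X) hX.star_eq.symm⟩
  have : (A * B).trace = (C * B * Cᴴ).trace := by
    rw [hC, Matrix.trace_mul_cycle, Matrix.trace_mul_cycle]
  rw [this]
  exact aux_trace_psd (hB.mul_mul_conjTranspose_same C)

lemma aux_psd_smul {n : ℕ} {A : Matrix (Fin n) (Fin n) ℂ} (hA : A.PosSemidef)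
    {c : ℝ} (hc : 0 ≤ c) : (c • A).PosSemidef := by
  refine .of_dotProduct_mulVec_nonneg ?_ fun x => ?_
  · show (c • A)ᴴ = c • A
    rw [Matrix.conjTranspose_smul, star_trivial, hA.1.eq]
  · rw [Matrix.smul_mulVec, dotProduct_smul, Complex.real_smul]
    exact mul_nonneg (by exact_mod_cast hc) (hA.dotProduct_mulVec_nonneg x)

/-- exact value of the hypothesis-testing quantity when `ρ = v vᴴ` is a
pure state which is an eigenvector of `σ` with eigenvalue `p₀ > 0`; the infimum is
attained by `Λ = (1 − ε) • ρ`. -/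
theorem stmt_9 (n : ℕ) (v : Fin n → ℂ) (hv : ∑ i, ‖v i‖ ^ 2 = 1)
    (σ : Matrix (Fin n) (Fin n) ℂ) (hσ : σ.PosSemidef) (hσtr : σ.trace = 1)
    (p₀ : ℝ) (hp₀ : 0 < p₀) (heig : σ.mulVec v = p₀ • v)
    (ε : ℝ) (hε0 : 0 ≤ ε) (hε1 : ε ≤ 1) :
    sInf (testValues (Matrix.vecMulVec v (star ∘ v)) σ ε) = (1 - ε) * p₀ ∧
    (ε < 1 → Dh (Matrix.vecMulVec v (star ∘ v)) σ ε = - Real.logb 2 ((1 - ε) * p₀)) ∧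
    ((1 - ε) • Matrix.vecMulVec v (star ∘ v)).PosSemidef ∧
    (1 - (1 - ε) • Matrix.vecMulVec v (star ∘ v)).PosSemidef ∧
    1 - ε ≤ (((1 - ε) • Matrix.vecMulVec v (star ∘ v)) *
        Matrix.vecMulVec v (star ∘ v)).trace.re ∧
    (((1 - ε) • Matrix.vecMulVec v (star ∘ v)) * σ).trace.re = (1 - ε) * p₀ := by
  set ρ : Matrix (Fin n) (Fin n) ℂ := Matrix.vecMulVec v (star ∘ v) with hρdef
  -- unit vector
  have h1 : star v ⬝ᵥ v = 1 := by
    have : star v ⬝ᵥ v = ((∑ i, ‖v i‖ ^ 2 : ℝ) : ℂ) := by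
      push_cast
      simp only [dotProduct, Pi.star_apply, Complex.star_def]
      exact Finset.sum_congr rfl fun i _ => by
        rw [Complex.conj_mul']
    rw [this, hv]; norm_num
  -- trace formula
  have htr : ∀ Λ : Matrix (Fin n) (Fin n) ℂ, (Λ * ρ).trace = star v ⬝ᵥ Λ.mulVec v := by
    intro Λ
    simp only [hρdef, Matrix.trace, Matrix.diag, Matrix.mul_apply, Matrix.vecMulVec_apply,
      dotProduct, Matrix.mulVec, Finset.mul_sum, Function.comp_apply, Pi.star_apply]
    exact Finset.sum_congr rfl fun i _ => Finset.sum_congr rfl fun j _ => by ring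
  -- multiplication facts
  have hmulvv : ∀ (w : Fin n → ℂ), σ * Matrix.vecMulVec v w = Matrix.vecMulVec (σ.mulVec v) w := by
    intro w; ext i j
    simp only [Matrix.mul_apply, Matrix.vecMulVec_apply, Matrix.mulVec, dotProduct,
      Finset.sum_mul]
    exact Finset.sum_congr rfl fun k _ => by ring
  have hsmulvec : ∀ (c : ℝ) (w : Fin n → ℂ),
      Matrix.vecMulVec (c • v) w = c • Matrix.vecMulVec v w := by
    intro c w; ext i j
    simp only [Matrix.vecMulVec_apply, Pi.smul_apply, Matrix.smul_apply, smul_eq_mul,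
      Complex.real_smul]
    ring
  have hmul1 : σ * ρ = (p₀ : ℝ) • ρ := by
    rw [hρdef, hmulvv, heig, hsmulvec]
  have hvecMul : σ.vecMul (star v) = (p₀ : ℝ) • star v := by
    have h' : star v ᵥ* σ = star (σ *ᵥ v) := by
      conv_lhs => rw [← hσ.1.eq]
      rw [Matrix.star_mulVec]
    rw [show σ.vecMul (star v) = star v ᵥ* σ from rfl, h', heig]
    ext i
    simp [Complex.real_smul]
  have hmul2 : ρ * σ = (p₀ : ℝ) • ρ := by
    have : ρ * σ = Matrix.vecMulVec v (σ.vecMul (star v)) := by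
      rw [hρdef]; ext i j
      simp only [Matrix.mul_apply, Matrix.vecMulVec_apply, Matrix.vecMul, dotProduct,
        Finset.mul_sum, Function.comp_apply, Pi.star_apply]
      exact Finset.sum_congr rfl fun k _ => by ring
    rw [this, hvecMul]
    ext i j
    simp only [Matrix.vecMulVec_apply, Pi.smul_apply, Matrix.smul_apply, smul_eq_mul,
      Complex.real_smul, hρdef, Function.comp_apply, Pi.star_apply]
    ring
  have hmvρ : ∀ x : Fin n → ℂ, ρ.mulVec x = (star v ⬝ᵥ x) • v := by
    intro x; ext i
    simp only [hρdef, Matrix.mulVec, Matrix.vecMulVec_apply, dotProduct, Pi.smul_apply,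
      smul_eq_mul, Function.comp_apply, Pi.star_apply, Finset.sum_mul]
    exact Finset.sum_congr rfl fun j _ => by ring
  have hρρ : ρ * ρ = ρ := by
    have : ρ * ρ = Matrix.vecMulVec (ρ.mulVec v) (star ∘ v) := by
      rw [hρdef]
      ext i j
      simp only [Matrix.mul_apply, Matrix.vecMulVec_apply, Matrix.mulVec, dotProduct,
        Finset.sum_mul, Function.comp_apply, Pi.star_apply]
      exact Finset.sum_congr rfl fun k _ => by ring
    rw [this, hmvρ, h1, one_smul]
  have hρH : ρ.IsHermitian := by
    show ρᴴ = ρ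
    ext i j
    simp only [hρdef, Matrix.conjTranspose_apply, Matrix.vecMulVec_apply, Function.comp_apply,
      Pi.star_apply, star_mul', star_star]
    ring
  have hρPSD : ρ.PosSemidef := by
    refine .of_dotProduct_mulVec_nonneg hρH fun x => ?_
    rw [hmvρ x, dotProduct_smul, smul_eq_mul]
    have hx : star x ⬝ᵥ v = star (star v ⬝ᵥ x) := by
      simp only [dotProduct, star_sum, Pi.star_apply, star_mul', star_star]
      exact Finset.sum_congr rfl fun i _ => by ring
    rw [mul_comm, hx]
    exact star_mul_self_nonneg _
  have htrρ : ρ.trace = 1 := by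
    have : ρ.trace = star v ⬝ᵥ v := by
      simp only [hρdef, Matrix.trace, Matrix.diag, Matrix.vecMulVec_apply, dotProduct,
        Function.comp_apply, Pi.star_apply]
      exact Finset.sum_congr rfl fun i _ => by ring
    rw [this, h1]
  -- 1 - ρ is PSD
  have h1ρH : (1 - ρ).IsHermitian := by
    show (1 - ρ)ᴴ = 1 - ρ
    rw [Matrix.conjTranspose_sub, Matrix.conjTranspose_one, hρH.eq]
  have h1ρPSD : (1 - ρ).PosSemidef := by
    have hsq : (1 - ρ)ᴴ * (1 - ρ) = 1 - ρ := by
      rw [h1ρH.eq, mul_sub, sub_mul, sub_mul, hρρ, one_mul, one_mul, mul_one]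
      abel
    rw [← hsq]
    exact Matrix.posSemidef_conjTranspose_mul_self _
  -- σ - p₀ • ρ is PSD
  have he1 : (1 - ρ) * σ = σ - (p₀ : ℝ) • ρ := by
    rw [sub_mul, one_mul, hmul2]
  have hσ'eq : (1 - ρ) * σ * (1 - ρ)ᴴ = σ - (p₀ : ℝ) • ρ := by
    rw [h1ρH.eq, he1, mul_sub, mul_one, sub_mul, Matrix.smul_mul, hρρ, hmul1]
    abel
  have hσ' : (σ - (p₀ : ℝ) • ρ).PosSemidef := by
    rw [← hσ'eq]
    exact hσ.mul_mul_conjTranspose_same (1 - ρ)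
  -- lower bound on every element of testValues
  have hlb : ∀ x ∈ testValues ρ σ ε, (1 - ε) * p₀ ≤ x := by
    rintro x ⟨Λ, hΛ, h1Λ, hge, rfl⟩
    have hσsplit : σ = (p₀ : ℝ) • ρ + (σ - (p₀:ℝ) • ρ) := by module
    have hdecomp : (Λ * σ).trace = (p₀ : ℝ) • (Λ * ρ).trace + (Λ * (σ - (p₀:ℝ) • ρ)).trace := by
      conv_lhs => rw [hσsplit]
      rw [mul_add, Matrix.trace_add, Matrix.mul_smul, Matrix.trace_smul]
    have hpos : 0 ≤ (Λ * (σ - (p₀:ℝ) • ρ)).trace := aux_trace_mul_psd hΛ hσ'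
    have hposre : 0 ≤ (Λ * (σ - (p₀:ℝ) • ρ)).trace.re := by
      have := Complex.le_def.mp hpos
      simpa using this.1
    rw [hdecomp, Complex.add_re, Complex.real_smul, Complex.re_ofReal_mul]
    calc (1 - ε) * p₀ = p₀ * (1 - ε) + 0 := by ring
      _ ≤ p₀ * (Λ * ρ).trace.re + (Λ * (σ - (p₀:ℝ) • ρ)).trace.re := by
          gcongr
  -- the optimal test
  have hΛ0PSD : ((1 - ε) • ρ).PosSemidef := aux_psd_smul hρPSD (by linarith)
  have hΛ0cPSD : (1 - (1 - ε) • ρ).PosSemidef := by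
    have heq : 1 - (1 - ε) • ρ = ε • (1 : Matrix (Fin n) (Fin n) ℂ) + (1 - ε) • (1 - ρ) := by
      rw [smul_sub]
      module
    rw [heq]
    exact Matrix.PosSemidef.add (aux_psd_smul Matrix.PosSemidef.one hε0)
      (aux_psd_smul h1ρPSD (by linarith))
  have hΛ0ρ : (((1 - ε) • ρ) * ρ).trace = ((1 - ε : ℝ) : ℂ) := by
    rw [Matrix.smul_mul, Matrix.trace_smul, hρρ, htrρ, Complex.real_smul, mul_one]
  have hΛ0σ : (((1 - ε) • ρ) * σ).trace = (((1 - ε) * p₀ : ℝ) : ℂ) := by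
    rw [Matrix.smul_mul, Matrix.trace_smul, hmul2, Matrix.trace_smul, htrρ, smul_smul]
    push_cast [Complex.real_smul]
    ring
  have hmem : (1 - ε) * p₀ ∈ testValues ρ σ ε := by
    refine ⟨(1 - ε) • ρ, hΛ0PSD, hΛ0cPSD, ?_, ?_⟩
    · rw [hΛ0ρ]; simp
    · rw [hΛ0σ]; simp
  have hsInf : sInf (testValues ρ σ ε) = (1 - ε) * p₀ := by
    apply le_antisymm
    · exact csInf_le ⟨(1 - ε) * p₀, fun x hx => hlb x hx⟩ hmem
    · exact le_csInf ⟨(1 - ε) * p₀, hmem⟩ hlb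
  refine ⟨hsInf, fun _ => by rw [Dh, hsInf], hΛ0PSD, hΛ0cPSD, ?_, ?_⟩
  · rw [hΛ0ρ]; simp
  · rw [hΛ0σ]; simp
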